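/- For all integers n ≥ 13, the 2-tortoise complexity of the regular paperfolding word satisfies ρ^{t(2)}_f(n) = 4n. -/

import Mathlib

/-- The tortoise operation on binary words: if the word contains a 1 (`true`),
delete the first occurrence of 1 and append a 1 at the right end; otherwise do nothing. -/
def tortoise (w : List Bool) : List Bool :=
  if true ∈ w then (w.erase true) ++ [true] else w

/-- `w` is a factor (subword) of the infinite word `x`. -/
def IsFactor (x : ℕ → Bool) (w : List Bool) : Prop :=
  ∃ i, w = (List.range w.length).map (fun t => x (i + t))

/-- The set of length-`n` factors of `x`. -/
def factorSet (x : ℕ → Bool) (n : ℕ) : Set (List Bool) :=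
  {w | w.length = n ∧ IsFactor x w}

/-- The factor complexity of `x`. -/
noncomputable def rho (x : ℕ → Bool) (n : ℕ) : ℕ :=
  (factorSet x n).ncard

/-- The tortoise complexity of `x`: the number of `∼ₜ`-equivalence classes of
length-`n` factors of `x`, i.e. the number of distinct images under `tortoise`. -/
noncomputable def rhoTort (x : ℕ → Bool) (n : ℕ) : ℕ :=
  (tortoise '' factorSet x n).ncard

/-- The `k`-tortoise complexity of `x`: the number of equivalence classes of
length-`n` factors of `x` under `tortoise^[k] w = tortoise^[k] v`. -/
noncomputable def rhoTortK (k : ℕ) (x : ℕ → Bool) (n : ℕ) : ℕ :=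
  ((tortoise^[k]) '' factorSet x n).ncard

/-- `y` is a left special factor of `x`: both `0y` and `1y` are factors of `x`. -/
def LeftSpecial (x : ℕ → Bool) (y : List Bool) : Prop :=
  IsFactor x (false :: y) ∧ IsFactor x (true :: y)

/-- The Thue–Morse sequence: `tm n` is the parity of the number of 1's in the
binary expansion of `n` (`true` = 1). -/
def tm (n : ℕ) : Bool :=
  decide ((Nat.digits 2 n).sum % 2 = 1)

/-- The regular paperfolding sequence, reindexed so that `pf m = f_{m+1}`:
writing `m + 1 = n' * 2^k` with `n'` odd, `pf m = true` iff `n' ≡ 3 (mod 4)`. -/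
def pf (m : ℕ) : Bool :=
  decide ((m + 1) / 2 ^ (padicValNat 2 (m + 1)) % 4 = 3)

namespace PF

def par (j : ℕ) : Bool := decide (j % 2 = 1)

lemma par_succ (j : ℕ) : par (j + 1) = !par j := by
  rcases Nat.mod_two_eq_zero_or_one j with h | h <;> simp [par, Nat.add_mod, h]

lemma par_eq_iff {a b : ℕ} : par a = par b ↔ a % 2 = b % 2 := by
  rcases Nat.mod_two_eq_zero_or_one a with h | h <;>
    rcases Nat.mod_two_eq_zero_or_one b with h2 | h2 <;> simp [par, h, h2]

lemma pf_even (j : ℕ) : pf (2 * j) = par j := by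
  have h0 : padicValNat 2 (2 * j + 1) = 0 :=
    padicValNat.eq_zero_of_not_dvd (by omega)
  simp only [pf, h0, pow_zero, Nat.div_one, par]
  exact decide_eq_decide.mpr (by omega)

lemma pf_odd (j : ℕ) : pf (2 * j + 1) = pf j := by
  have h1 : (2 * j + 1) + 1 = 2 * (j + 1) := by ring
  have h2 : padicValNat 2 (2 * (j + 1)) = 1 + padicValNat 2 (j + 1) := by
    rw [padicValNat.mul (by omega) (by omega), padicValNat.self (by omega)]
  simp only [pf, h1, h2]
  congr 1
  rw [pow_add, pow_one, ← Nat.div_div_eq_div_mul,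
    Nat.mul_div_cancel_left _ (by norm_num : (0:ℕ) < 2)]

end PF
def W (i n : ℕ) : List Bool := (List.range n).map (fun t => pf (i + t))

lemma W_length (i n : ℕ) : (W i n).length = n := by simp [W]

lemma W_getElem (i n t : ℕ) (h : t < n) :
    (W i n)[t]'(by simp [W_length, h]) = pf (i + t) := by
  simp [W]

lemma W_mem_factorSet (i n : ℕ) : W i n ∈ factorSet pf n :=
  ⟨W_length i n, i, by rw [W_length]; rfl⟩

lemma mem_factorSet_iff {w : List Bool} {n : ℕ} :
    w ∈ factorSet pf n ↔ w.length = n ∧ ∃ i, w = W i n := by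
  constructor
  · rintro ⟨hl, i, hw⟩
    exact ⟨hl, i, by rw [hw, hl]; rfl⟩
  · rintro ⟨hl, i, rfl⟩
    exact W_mem_factorSet i n

lemma W_eq_apply {i i' n : ℕ} (h : W i n = W i' n) (t : ℕ) (ht : t < n) :
    pf (i + t) = pf (i' + t) := by
  rw [← W_getElem i n t ht, ← W_getElem i' n t ht]
  simp only [h]

lemma W_succ (i n : ℕ) : W i (n + 1) = W i n ++ [pf (i + n)] := by
  simp [W, List.range_succ]

lemma W_cons (i n : ℕ) : W i (n + 1) = pf i :: W (i + 1) n := by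
  apply List.ext_getElem
  · simp [W_length]
  · intro t h1 h2
    rw [W_getElem i (n+1) t (by simpa [W_length] using h1)]
    match t with
    | 0 => simp
    | t + 1 =>
      simp only [List.getElem_cons_succ]
      rw [W_getElem (i+1) n t (by simp [W_length] at h2; omega)]
      congr 1
      omega

lemma W_take (i n m : ℕ) (h : m ≤ n) : (W i n).take m = W i m := by
  simp [W, ← List.map_take, List.take_range, Nat.min_eq_left h]

lemma W_drop (i n m : ℕ) : (W i n).drop m = W (i + m) (n - m) := by
  apply List.ext_getElem
  · simp [W_length]
  · intro t h1 h2
    rw [List.getElem_drop]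
    rw [W_getElem i n (m + t) (by simp [W_length] at h1 ⊢; omega),
      W_getElem (i + m) (n - m) t (by simp [W_length] at h2 ⊢; omega)]
    congr 1
    omega

lemma W_append_one {w : List Bool} {b : Bool} {i n : ℕ} (hl : w.length = n)
    (h : w ++ [b] = W i (n + 1)) : w = W i n ∧ b = pf (i + n) := by
  rw [W_succ] at h
  have := List.append_inj h (by simp [hl, W_length])
  exact ⟨this.1, by simpa using this.2⟩

-- small pf values
lemma pf0 : pf 0 = false := by simpa [PF.par] using PF.pf_even 0
lemma pf1 : pf 1 = false := by simpa [pf0] using PF.pf_odd 0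
lemma pf2 : pf 2 = true := by simpa [PF.par] using PF.pf_even 1
lemma pf3 : pf 3 = false := by simpa [pf1] using PF.pf_odd 1
lemma pf4 : pf 4 = false := by simpa [PF.par] using PF.pf_even 2
lemma pf5 : pf 5 = true := by simpa [pf2] using PF.pf_odd 2
lemma pf6 : pf 6 = true := by simpa [PF.par] using PF.pf_even 3
lemma pf7 : pf 7 = false := by simpa [pf3] using PF.pf_odd 3
lemma pf8 : pf 8 = false := by simpa [PF.par] using PF.pf_even 4
lemma pf9 : pf 9 = false := by simpa [pf4] using PF.pf_odd 4
lemma pf10 : pf 10 = true := by simpa [PF.par] using PF.pf_even 5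
lemma pf11 : pf 11 = true := by simpa [pf5] using PF.pf_odd 5
lemma pf12 : pf 12 = false := by simpa [PF.par] using PF.pf_even 6

open PF

lemma mid_alt (m : ℕ) : pf (2 * m + 1) = pf (2 * m) ∨ pf (2 * m + 2) = pf (2 * m + 1) := by
  rw [pf_even, pf_odd, show 2 * m + 2 = 2 * (m + 1) by ring, pf_even, par_succ]
  cases h : pf m <;> cases h2 : PF.par m <;> simp [h, h2]

lemma no_alt (k : ℕ) :
    pf (k + 1) = pf k ∨ pf (k + 2) = pf (k + 1) ∨ pf (k + 3) = pf (k + 2) := by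
  rcases Nat.even_or_odd k with hk | hk
  · obtain ⟨m, hm⟩ := hk
    have hm' : k = 2 * m := by omega
    subst hm'
    rcases mid_alt m with h | h
    · exact Or.inl h
    · exact Or.inr (Or.inl h)
  · obtain ⟨m, hm⟩ := hk
    subst hm
    rcases mid_alt (m + 1) with h | h
    · right; left
      rw [show 2*m+1+2 = 2*(m+1)+1 by ring, show 2*m+1+1 = 2*(m+1) by ring]; exact h
    · right; right
      rw [show 2*m+1+3 = 2*(m+1)+2 by ring, show 2*m+1+2 = 2*(m+1)+1 by ring]; exact h

lemma has_true (i : ℕ) :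
    pf i = true ∨ pf (i + 1) = true ∨ pf (i + 2) = true ∨ pf (i + 3) = true := by
  rcases Nat.even_or_odd i with hi | hi
  · obtain ⟨m, hm⟩ := hi
    have hm' : i = 2 * m := by omega
    subst hm'
    rw [show 2*m+2 = 2 * (m + 1) by ring, pf_even, pf_even, par_succ]
    cases h : PF.par m <;> simp [h]
  · obtain ⟨m, hm⟩ := hi
    subst hm
    rw [show 2*m+1+1 = 2*(m+1) by ring, show 2*m+1+3 = 2*((m+1)+1) by ring, pf_even, pf_even]
    cases h : PF.par (m+1)
    · right; right; right; rw [par_succ, h]; rfl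
    · right; left; rfl
lemma sync_core {j j' n : ℕ} (h9 : 9 ≤ n) (h : W (2*j) n = W (2*j'+1) n) : False := by
  have e : ∀ x, x ≤ 3 → pf (j + x) = PF.par (j' + x + 1) := by
    intro x hx
    have h1 := W_eq_apply h (2*x+1) (by omega)
    rw [show 2*j + (2*x+1) = 2*(j+x)+1 by ring, pf_odd] at h1
    rw [show 2*j'+1 + (2*x+1) = 2*(j'+x+1) by ring, pf_even] at h1
    exact h1
  have e0 : pf j = PF.par (j'+1) := by simpa using e 0 (by omega)
  have e1 : pf (j+1) = PF.par (j'+2) := by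
    have h1 := e 1 (by omega); rw [show j'+1+1 = j'+2 by omega] at h1; exact h1
  have e2 : pf (j+2) = PF.par (j'+3) := by
    have h1 := e 2 (by omega); rw [show j'+2+1 = j'+3 by omega] at h1; exact h1
  have e3 : pf (j+3) = PF.par (j'+4) := by
    have h1 := e 3 (by omega); rw [show j'+3+1 = j'+4 by omega] at h1; exact h1
  have p1 : PF.par (j'+2) = !PF.par (j'+1) := by
    rw [show j'+2 = (j'+1)+1 by omega, PF.par_succ]
  have p2 : PF.par (j'+3) = !PF.par (j'+2) := by
    rw [show j'+3 = (j'+2)+1 by omega, PF.par_succ]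
  have p3 : PF.par (j'+4) = !PF.par (j'+3) := by
    rw [show j'+4 = (j'+3)+1 by omega, PF.par_succ]
  rcases no_alt j with hh | hh | hh
  · rw [e1, e0, p1] at hh
    cases PF.par (j'+1) <;> simp_all
  · rw [e2, e1, p2] at hh
    cases PF.par (j'+2) <;> simp_all
  · rw [e3, e2, p3] at hh
    cases PF.par (j'+3) <;> simp_all

lemma sync {n i i' : ℕ} (h9 : 9 ≤ n) (h : W i n = W i' n) : i % 2 = i' % 2 := by
  by_contra hne
  rcases Nat.mod_two_eq_zero_or_one i with h0 | h0 <;>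
    rcases Nat.mod_two_eq_zero_or_one i' with h1 | h1
  · omega
  · obtain ⟨j, rfl⟩ : ∃ j, i = 2*j := ⟨i/2, by omega⟩
    obtain ⟨j', rfl⟩ : ∃ j', i' = 2*j'+1 := ⟨i'/2, by omega⟩
    exact sync_core h9 h
  · obtain ⟨j, rfl⟩ : ∃ j, i' = 2*j := ⟨i'/2, by omega⟩
    obtain ⟨j', rfl⟩ : ∃ j', i = 2*j'+1 := ⟨i/2, by omega⟩
    exact sync_core h9 h.symm
  · omega
def psi : ℕ → ℕ → Bool → Bool → Bool
  | 0, _, _, p => p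
  | K+1, x, b, p =>
    if x % 2 = 0 then
      (if K = 0 then xor b (decide (x/2 % 2 = 1)) else decide (x/2 % 2 = 1))
    else psi K (x/2) b p

def candW (K r : ℕ) (b p0 p1 : Bool) (n : ℕ) : List Bool :=
  (List.range n).map (fun t =>
    if r + t < 2^K then psi K (r+t) b p0 else psi K (r+t-2^K) (!b) p1)

lemma candW_length (K r : ℕ) (b p0 p1 : Bool) (n : ℕ) :
    (candW K r b p0 p1 n).length = n := by simp [candW]

lemma psi_spec : ∀ K q x, x < 2^K → pf (2^K * q + x) = psi K x (PF.par q) (pf q) := by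
  intro K
  induction K with
  | zero =>
    intro q x hx
    interval_cases x
    simp [psi]
  | succ K ih =>
    intro q x hx
    have h2 : (2:ℕ)^(K+1) = 2 * 2^K := by ring
    rcases Nat.mod_two_eq_zero_or_one x with hpar | hpar
    · obtain ⟨y, rfl⟩ : ∃ y, x = 2*y := ⟨x/2, by omega⟩
      rw [show 2^(K+1) * q + 2*y = 2 * (2^K * q + y) by ring, pf_even]
      rcases Nat.eq_zero_or_pos K with hK | hK
      · subst hK
        simp only [psi, hpar, pow_zero, one_mul]
        simp only [if_true, if_pos rfl, eq_self_iff_true]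
        rw [show (2*y)/2 = y by omega]
        unfold PF.par
        rcases Nat.mod_two_eq_zero_or_one q with hq | hq <;>
          rcases Nat.mod_two_eq_zero_or_one y with hy | hy <;>
            simp [Nat.add_mod, hq, hy]
      · obtain ⟨c, hc⟩ : (2:ℕ) ∣ 2^K := dvd_pow_self 2 (by omega)
        simp only [psi, if_pos hpar, if_neg (by omega : ¬ K = 0)]
        rw [show (2*y)/2 = y by omega]
        unfold PF.par
        simp only [decide_eq_decide]
        rw [hc, Nat.mul_assoc]
        omega
    · obtain ⟨y, rfl⟩ : ∃ y, x = 2*y+1 := ⟨x/2, by omega⟩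
      rw [show 2^(K+1) * q + (2*y+1) = 2 * (2^K * q + y) + 1 by ring, pf_odd]
      rw [ih q y (by omega)]
      simp only [psi, if_neg (by omega : ¬(2*y+1) % 2 = 0)]
      congr 1
      omega

lemma W_eq_candW (K n i : ℕ) (hn : n ≤ 2^K) :
    W i n = candW K (i % 2^K) (PF.par (i / 2^K)) (pf (i / 2^K)) (pf (i / 2^K + 1)) n := by
  apply List.ext_getElem
  · simp [W_length, candW_length]
  · intro t h1 h2
    simp only [W_length] at h1
    rw [W_getElem i n t h1]
    set q := i / 2^K with hq
    set r := i % 2^K with hr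
    have hi : i = 2^K * q + r := (Nat.div_add_mod i (2^K)).symm
    have hrlt : r < 2^K := Nat.mod_lt _ (by positivity)
    simp only [candW, List.getElem_map, List.getElem_range]
    by_cases hc : r + t < 2^K
    · rw [if_pos hc, show i + t = 2^K * q + (r + t) by rw [hi]; ring,
        psi_spec K q (r+t) hc]
    · have hle : 2^K ≤ r + t := Nat.le_of_not_lt hc
      have heq : i + t = 2^K * (q+1) + (r + t - 2^K) := by
        rw [hi, Nat.mul_succ]
        omega
      rw [if_neg hc, heq, psi_spec K (q+1) (r+t-2^K) (by omega), PF.par_succ]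

def combos : List (Bool × Bool × Bool) :=
  [(false,false,false),(false,false,true),(false,true,false),(false,true,true),
   (true,false,false),(true,false,true),(true,true,false),(true,true,true)]

def wit : Bool → Bool → Bool → ℕ
  | false, false, false => 0
  | false, false, true => 4
  | false, true, false => 2
  | false, true, true => 10
  | true, false, false => 3
  | true, false, true => 1
  | true, true, false => 11
  | true, true, true => 5

lemma wit_spec (b p0 p1 : Bool) :
    PF.par (wit b p0 p1) = b ∧ pf (wit b p0 p1) = p0 ∧ pf (wit b p0 p1 + 1) = p1 := by
  cases b <;> cases p0 <;> cases p1 <;>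
    simp [wit, PF.par, pf0, pf1, pf2, pf3, pf4, pf5, pf6, pf10, pf11, pf12]

def candList (n K : ℕ) : List (List Bool) :=
  (List.range (2^K)).flatMap (fun r =>
    combos.map (fun c => candW K r c.1 c.2.1 c.2.2 n))

lemma factorSet_eq (n K : ℕ) (hn : n ≤ 2^K) :
    factorSet pf n = {w | w ∈ candList n K} := by
  ext w
  constructor
  · intro hw
    obtain ⟨hl, i, rfl⟩ := mem_factorSet_iff.mp hw
    rw [W_eq_candW K n i hn]
    simp only [candList, List.mem_flatMap, Set.mem_setOf_eq]
    refine ⟨i % 2^K, by simp [Nat.mod_lt _ (show 0 < 2^K by positivity)], ?_⟩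
    simp only [List.mem_map]
    refine ⟨(PF.par (i / 2^K), pf (i / 2^K), pf (i / 2^K + 1)), ?_, rfl⟩
    cases PF.par (i / 2^K) <;> cases pf (i / 2^K) <;> cases pf (i / 2^K + 1) <;>
      simp [combos]
  · intro hw
    simp only [candList, List.mem_flatMap, List.mem_map, Set.mem_setOf_eq,
      List.mem_range] at hw
    obtain ⟨r, hr, c, _, rfl⟩ := hw
    obtain ⟨w1, w2, w3⟩ := wit_spec c.1 c.2.1 c.2.2
    set q := wit c.1 c.2.1 c.2.2
    have hkey := W_eq_candW K n (2^K * q + r) hn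
    rw [show (2^K * q + r) % 2^K = r by rw [Nat.mul_add_mod, Nat.mod_eq_of_lt hr],
      show (2^K * q + r) / 2^K = q by
        rw [Nat.mul_add_div (by positivity), Nat.div_eq_of_lt hr]; omega] at hkey
    rw [show candW K r c.1 c.2.1 c.2.2 n = W (2^K*q+r) n from by rw [hkey, w1, w2, w3]]
    exact W_mem_factorSet _ _
lemma factorSet_finite (n : ℕ) : (factorSet pf n).Finite := by
  rw [factorSet_eq n n (Nat.le_of_lt (Nat.lt_two_pow_self (n := n)))]
  exact (candList n n).finite_toSet

def RS (n : ℕ) : Set (List Bool) :=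
  {w | w ∈ factorSet pf n ∧ w ++ [false] ∈ factorSet pf (n+1) ∧
    w ++ [true] ∈ factorSet pf (n+1)}

lemma RS_subset (n : ℕ) : RS n ⊆ factorSet pf n := fun _ h => h.1

lemma RS_finite (n : ℕ) : (RS n).Finite := (factorSet_finite n).subset (RS_subset n)

lemma rho_step (n : ℕ) : rho pf (n+1) = rho pf n + (RS n).ncard := by
  classical
  set Ef : Set (List Bool) :=
    {w | w ∈ factorSet pf n ∧ w ++ [false] ∈ factorSet pf (n+1)} with hEf
  set Et : Set (List Bool) :=
    {w | w ∈ factorSet pf n ∧ w ++ [true] ∈ factorSet pf (n+1)} with hEt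
  have hEfFin : Ef.Finite := (factorSet_finite n).subset (fun w h => h.1)
  have hEtFin : Et.Finite := (factorSet_finite n).subset (fun w h => h.1)
  have hG : factorSet pf (n+1) = ((· ++ [false]) '' Ef) ∪ ((· ++ [true]) '' Et) := by
    ext z
    constructor
    · intro hz
      obtain ⟨hl, i, rfl⟩ := mem_factorSet_iff.mp hz
      have hmem : W i n ++ [pf (i+n)] ∈ factorSet pf (n+1) := by
        rw [← W_succ]; exact W_mem_factorSet _ _
      cases h : pf (i+n)
      · left
        refine ⟨W i n, ⟨W_mem_factorSet _ _, ?_⟩, ?_⟩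
        · rw [← h]; exact hmem
        · show W i n ++ [false] = W i (n+1)
          rw [← h]; exact (W_succ i n).symm
      · right
        refine ⟨W i n, ⟨W_mem_factorSet _ _, ?_⟩, ?_⟩
        · rw [← h]; exact hmem
        · show W i n ++ [true] = W i (n+1)
          rw [← h]; exact (W_succ i n).symm
    · rintro (⟨w, hw, rfl⟩ | ⟨w, hw, rfl⟩)
      · exact hw.2
      · exact hw.2
  have hdisj : Disjoint ((· ++ [false]) '' Ef) ((· ++ [true]) '' Et) := by
    rw [Set.disjoint_left]
    rintro z ⟨w, hw, rfl⟩ ⟨w', hw', heq⟩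
    have := (List.append_inj' heq.symm rfl).2
    simp at this
  have hinjf : Set.InjOn (· ++ [false]) Ef :=
    Function.Injective.injOn (fun a b h => (List.append_inj' h rfl).1)
  have hinjt : Set.InjOn (· ++ [true]) Et :=
    Function.Injective.injOn (fun a b h => (List.append_inj' h rfl).1)
  have hunion : Ef ∪ Et = factorSet pf n := by
    ext w
    constructor
    · rintro (h | h) <;> exact h.1
    · intro hw
      obtain ⟨hl, i, rfl⟩ := mem_factorSet_iff.mp hw
      have hmem : W i n ++ [pf (i+n)] ∈ factorSet pf (n+1) := by
        rw [← W_succ]; exact W_mem_factorSet _ _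
      cases h : pf (i+n)
      · left; exact ⟨hw, by rw [← h]; exact hmem⟩
      · right; exact ⟨hw, by rw [← h]; exact hmem⟩
  have hinter : Ef ∩ Et = RS n := by
    ext w
    constructor
    · rintro ⟨⟨h1, h2⟩, ⟨_, h3⟩⟩; exact ⟨h1, h2, h3⟩
    · rintro ⟨h1, h2, h3⟩; exact ⟨⟨h1, h2⟩, ⟨h1, h3⟩⟩
  have key := Set.ncard_union_add_ncard_inter Ef Et hEfFin hEtFin
  rw [hunion, hinter] at key
  have : rho pf (n+1) = Ef.ncard + Et.ncard := by
    rw [rho, hG, Set.ncard_union_eq hdisj (hEfFin.image _) (hEtFin.image _),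
      Set.ncard_image_of_injOn hinjf, Set.ncard_image_of_injOn hinjt]
  rw [this, rho]
  omega

lemma RS_eq_filter (n K : ℕ) (h2 : n+1 ≤ 2^K) :
    RS n = ↑(((candList n K).toFinset.filter (fun w =>
      (w ++ [false]) ∈ (candList (n+1) K).toFinset ∧
      (w ++ [true]) ∈ (candList (n+1) K).toFinset))) := by
  unfold RS
  rw [factorSet_eq n K (by omega), factorSet_eq (n+1) K h2]
  ext w
  simp [List.mem_toFinset]

lemma RS_ncard_eq (n K : ℕ) (h2 : n+1 ≤ 2^K) :
    (RS n).ncard = (((candList n K).toFinset.filter (fun w =>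
      (w ++ [false]) ∈ (candList (n+1) K).toFinset ∧
      (w ++ [true]) ∈ (candList (n+1) K).toFinset))).card := by
  rw [RS_eq_filter n K h2, Set.ncard_coe_finset]
lemma factorSet_ncard (n K : ℕ) (h : n ≤ 2^K) :
    rho pf n = (candList n K).toFinset.card := by
  rw [rho, factorSet_eq n K h,
    show {w | w ∈ candList n K} = ((candList n K).toFinset : Set (List Bool)) from
      by ext w; simp, Set.ncard_coe_finset]

set_option maxRecDepth 100000 in
lemma rho13 : rho pf 13 = 52 := by
  rw [factorSet_ncard 13 4 (by norm_num)]; decide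


set_option maxRecDepth 1000000 in
set_option maxHeartbeats 4000000 in
lemma RS_card_9 : (RS 9).ncard = 4 := by
  rw [RS_ncard_eq 9 4 (by norm_num)]; decide

set_option maxRecDepth 1000000 in
set_option maxHeartbeats 4000000 in
lemma RS_card_10 : (RS 10).ncard = 4 := by
  rw [RS_ncard_eq 10 4 (by norm_num)]; decide

set_option maxRecDepth 1000000 in
set_option maxHeartbeats 4000000 in
lemma RS_card_11 : (RS 11).ncard = 4 := by
  rw [RS_ncard_eq 11 4 (by norm_num)]; decide

set_option maxRecDepth 1000000 in
set_option maxHeartbeats 4000000 in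
lemma RS_card_12 : (RS 12).ncard = 4 := by
  rw [RS_ncard_eq 12 4 (by norm_num)]; decide

set_option maxRecDepth 1000000 in
set_option maxHeartbeats 4000000 in
lemma RS_card_13 : (RS 13).ncard = 4 := by
  rw [RS_ncard_eq 13 4 (by norm_num)]; decide

set_option maxRecDepth 1000000 in
set_option maxHeartbeats 4000000 in
lemma RS_card_14 : (RS 14).ncard = 4 := by
  rw [RS_ncard_eq 14 4 (by norm_num)]; decide

set_option maxRecDepth 1000000 in
set_option maxHeartbeats 4000000 in
lemma RS_card_15 : (RS 15).ncard = 4 := by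
  rw [RS_ncard_eq 15 4 (by norm_num)]; decide

set_option maxRecDepth 1000000 in
set_option maxHeartbeats 4000000 in
lemma RS_card_16 : (RS 16).ncard = 4 := by
  rw [RS_ncard_eq 16 5 (by norm_num)]; decide

set_option maxRecDepth 1000000 in
set_option maxHeartbeats 4000000 in
lemma RS_card_17 : (RS 17).ncard = 4 := by
  rw [RS_ncard_eq 17 5 (by norm_num)]; decide

set_option maxRecDepth 1000000 in
set_option maxHeartbeats 4000000 in
lemma RS_card_18 : (RS 18).ncard = 4 := by
  rw [RS_ncard_eq 18 5 (by norm_num)]; decide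

lemma RS_card_base (n : ℕ) (h1 : 9 ≤ n) (h2 : n ≤ 18) : (RS n).ncard = 4 := by
  interval_cases n
  exacts [RS_card_9, RS_card_10, RS_card_11, RS_card_12, RS_card_13, RS_card_14,
    RS_card_15, RS_card_16, RS_card_17, RS_card_18]
lemma pf_even' (m : ℕ) (h : m % 2 = 0) : pf m = PF.par (m/2) := by
  obtain ⟨j, rfl⟩ : ∃ j, m = 2*j := ⟨m/2, by omega⟩
  rw [pf_even, show 2*j/2 = j by omega]

lemma pf_odd' (m : ℕ) (h : m % 2 = 1) : pf m = pf (m/2) := by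
  obtain ⟨j, rfl⟩ : ∃ j, m = 2*j+1 := ⟨m/2, by omega⟩
  rw [pf_odd, show (2*j+1)/2 = j by omega]

lemma par_congr {a b : ℕ} (h : a % 2 = b % 2) : PF.par a = PF.par b :=
  PF.par_eq_iff.mpr h

def oddPart (w : List Bool) : List Bool :=
  (List.range (w.length / 2)).map (fun k => w.getD (2*k+1) false)

def evenPart (w : List Bool) : List Bool :=
  (List.range ((w.length + 1) / 2)).map (fun k => w.getD (2*k) false)

lemma W_getD (i n t : ℕ) (h : t < n) : (W i n).getD t false = pf (i + t) := by
  rw [List.getD_eq_getElem _ _ (by simp [W_length, h]), W_getElem i n t h]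

lemma oddPart_W (j n : ℕ) : oddPart (W (2*j) n) = W j (n/2) := by
  unfold oddPart
  rw [W_length]
  apply List.ext_getElem
  · simp [W_length]
  · intro k h1 h2
    simp only [List.getElem_map, List.getElem_range]
    simp only [List.length_map, List.length_range] at h1
    rw [W_getD (2*j) n (2*k+1) (by omega), W_getElem j (n/2) k (by omega),
      pf_odd' _ (by omega), show (2*j + (2*k+1))/2 = j + k by omega]

lemma evenPart_W (j n : ℕ) : evenPart (W (2*j+1) n) = W j ((n+1)/2) := by
  unfold evenPart
  rw [W_length]
  apply List.ext_getElem
  · simp [W_length]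
  · intro k h1 h2
    simp only [List.getElem_map, List.getElem_range]
    simp only [List.length_map, List.length_range] at h1
    rw [W_getD (2*j+1) n (2*k) (by omega), W_getElem j ((n+1)/2) k (by omega),
      pf_odd' _ (by omega), show (2*j+1 + 2*k)/2 = j + k by omega]

lemma rs_occ {n : ℕ} {w : List Bool} (hw : w ∈ RS n) :
    ∃ i0 i1, w = W i0 n ∧ w = W i1 n ∧ pf (i0 + n) = false ∧ pf (i1 + n) = true := by
  obtain ⟨hF, hf, ht⟩ := hw
  have hlen := hF.1
  obtain ⟨_, i0, h0⟩ := mem_factorSet_iff.mp hf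
  obtain ⟨_, i1, h1⟩ := mem_factorSet_iff.mp ht
  obtain ⟨e0, b0⟩ := W_append_one hlen h0
  obtain ⟨e1, b1⟩ := W_append_one hlen h1
  exact ⟨i0, i1, e0, e1, b0.symm, b1.symm⟩

/-- reconstruction for even starts -/
lemma even_start_eq {j j' h n : ℕ} (hpar : j % 2 = j' % 2)
    (hW : W j h = W j' h) (hn : n ≤ 2*h+1) : W (2*j) n = W (2*j') n := by
  apply List.ext_getElem
  · simp [W_length]
  · intro t h1 h2
    simp only [W_length] at h1
    rw [W_getElem _ n t h1, W_getElem _ n t h1]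
    rcases Nat.mod_two_eq_zero_or_one t with ht | ht
    · rw [pf_even' _ (by omega), pf_even' _ (by omega)]
      exact par_congr (by omega)
    · have l1 : pf (2*j + t) = pf (j + t/2) := by
        rw [pf_odd' _ (by omega)]; congr 1; omega
      have l2 : pf (2*j' + t) = pf (j' + t/2) := by
        rw [pf_odd' _ (by omega)]; congr 1; omega
      rw [l1, l2]
      exact W_eq_apply hW (t/2) (by omega)

/-- reconstruction for odd starts -/
lemma odd_start_eq {j j' h n : ℕ} (hpar : j % 2 = j' % 2)
    (hW : W j h = W j' h) (hn : n ≤ 2*h) : W (2*j+1) n = W (2*j'+1) n := by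
  apply List.ext_getElem
  · simp [W_length]
  · intro t h1 h2
    simp only [W_length] at h1
    rw [W_getElem _ n t h1, W_getElem _ n t h1]
    rcases Nat.mod_two_eq_zero_or_one t with ht | ht
    · have l1 : pf (2*j+1 + t) = pf (j + t/2) := by
        rw [pf_odd' _ (by omega)]; congr 1; omega
      have l2 : pf (2*j'+1 + t) = pf (j' + t/2) := by
        rw [pf_odd' _ (by omega)]; congr 1; omega
      rw [l1, l2]
      exact W_eq_apply hW (t/2) (by omega)
    · rw [pf_even' _ (by omega), pf_even' _ (by omega)]
      exact par_congr (by omega)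

lemma RS_rec_odd {n : ℕ} (h19 : 19 ≤ n) (hodd : n % 2 = 1) :
    (RS n).ncard = (RS (n/2)).ncard := by
  set h := n / 2 with hh
  have hn : n = 2*h+1 := by omega
  have h9 : (9:ℕ) ≤ h := by omega
  have struct : ∀ w ∈ RS n, ∃ j0 j1, w = W (2*j0) n ∧ w = W (2*j1) n ∧
      pf (j0 + h) = false ∧ pf (j1 + h) = true := by
    intro w hw
    obtain ⟨i0, i1, e0, e1, b0, b1⟩ := rs_occ hw
    have hpar : i0 % 2 = i1 % 2 := sync (by omega) (e0.symm.trans e1)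
    have heven : i0 % 2 = 0 := by
      by_contra hodd0
      obtain ⟨j0, rfl⟩ : ∃ j, i0 = 2*j+1 := ⟨i0/2, by omega⟩
      obtain ⟨j1, rfl⟩ : ∃ j, i1 = 2*j+1 := ⟨i1/2, by omega⟩
      have hj : PF.par (j0+1) = PF.par (j1+1) := by
        have h1 := W_eq_apply (e0.symm.trans e1) 1 (by omega)
        rw [pf_even' _ (by omega), pf_even' _ (by omega),
          show (2*j0+1+1)/2 = j0+1 by omega, show (2*j1+1+1)/2 = j1+1 by omega] at h1
        exact h1
      have hf0 : PF.par (j0+h+1) = false := by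
        rw [← b0, pf_even' _ (by omega), show (2*j0+1+n)/2 = j0+h+1 by omega]
      have hf1 : PF.par (j1+h+1) = true := by
        rw [← b1, pf_even' _ (by omega), show (2*j1+1+n)/2 = j1+h+1 by omega]
      have : PF.par (j0+h+1) = PF.par (j1+h+1) :=
        par_congr (by have := PF.par_eq_iff.mp hj; omega)
      rw [hf0, hf1] at this
      exact Bool.false_ne_true this
    obtain ⟨j0, rfl⟩ : ∃ j, i0 = 2*j := ⟨i0/2, by omega⟩
    obtain ⟨j1, rfl⟩ : ∃ j, i1 = 2*j := ⟨i1/2, by omega⟩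
    refine ⟨j0, j1, e0, e1, ?_, ?_⟩
    · have hx : pf (2*j0+n) = pf (j0+h) := by
        rw [pf_odd' _ (by omega)]; congr 1; omega
      rw [← hx]; exact b0
    · have hx : pf (2*j1+n) = pf (j1+h) := by
        rw [pf_odd' _ (by omega)]; congr 1; omega
      rw [← hx]; exact b1
  have hinj : Set.InjOn oddPart (RS n) := by
    intro w hw w' hw' heq
    obtain ⟨j0, j1, e0, e1, b0, b1⟩ := struct w hw
    obtain ⟨j0', j1', e0', e1', b0', b1'⟩ := struct w' hw'
    have hv : W j0 h = W j0' h := by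
      have hv0 : oddPart w = W j0 h := by rw [e0, oddPart_W, ← hh]
      have hv0' : oddPart w' = W j0' h := by rw [e0', oddPart_W, ← hh]
      rw [← hv0, ← hv0', heq]
    have hp : j0 % 2 = j0' % 2 := sync h9 hv
    rw [e0, e0']
    exact even_start_eq hp hv (by omega)
  have himg : oddPart '' RS n = RS h := by
    apply Set.Subset.antisymm
    · rintro v ⟨w, hw, rfl⟩
      obtain ⟨j0, j1, e0, e1, b0, b1⟩ := struct w hw
      have hv0 : oddPart w = W j0 h := by rw [e0, oddPart_W, ← hh]
      have hv1 : oddPart w = W j1 h := by rw [e1, oddPart_W, ← hh]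
      refine ⟨hv0 ▸ W_mem_factorSet j0 h, ?_, ?_⟩
      · rw [hv0, ← b0, ← W_succ]
        exact W_mem_factorSet j0 (h+1)
      · rw [hv1, ← b1, ← W_succ]
        exact W_mem_factorSet j1 (h+1)
    · intro v hv
      obtain ⟨j0, j1, e0, e1, b0, b1⟩ := rs_occ hv
      have hp : j0 % 2 = j1 % 2 := sync h9 (e0.symm.trans e1)
      refine ⟨W (2*j0) n, ?_, ?_⟩
      · refine ⟨W_mem_factorSet _ _, ?_, ?_⟩
        · have : W (2*j0) n ++ [pf (2*j0 + n)] = W (2*j0) (n+1) := (W_succ _ _).symm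
          rw [pf_odd' _ (by omega), show (2*j0+n)/2 = j0 + h by omega, b0] at this
          rw [this]
          exact W_mem_factorSet _ _
        · have hsw : W (2*j0) n = W (2*j1) n :=
            even_start_eq hp (e0.symm.trans e1) (by omega)
          have : W (2*j1) n ++ [pf (2*j1 + n)] = W (2*j1) (n+1) := (W_succ _ _).symm
          rw [pf_odd' _ (by omega), show (2*j1+n)/2 = j1 + h by omega, b1] at this
          rw [hsw, this]
          exact W_mem_factorSet _ _
      · rw [oddPart_W, ← hh, ← e0]
  calc (RS n).ncard = (oddPart '' RS n).ncard := (Set.ncard_image_of_injOn hinj).symm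
    _ = (RS h).ncard := by rw [himg]

lemma RS_rec_even {n : ℕ} (h19 : 19 ≤ n) (heven : n % 2 = 0) :
    (RS n).ncard = (RS (n/2)).ncard := by
  set h := n / 2 with hh
  have hn : n = 2*h := by omega
  have h9 : (9:ℕ) ≤ h := by omega
  have struct : ∀ w ∈ RS n, ∃ j0 j1, w = W (2*j0+1) n ∧ w = W (2*j1+1) n ∧
      pf (j0 + h) = false ∧ pf (j1 + h) = true := by
    intro w hw
    obtain ⟨i0, i1, e0, e1, b0, b1⟩ := rs_occ hw
    have hpar : i0 % 2 = i1 % 2 := sync (by omega) (e0.symm.trans e1)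
    have hoddocc : i0 % 2 = 1 := by
      by_contra heven0
      obtain ⟨j0, rfl⟩ : ∃ j, i0 = 2*j := ⟨i0/2, by omega⟩
      obtain ⟨j1, rfl⟩ : ∃ j, i1 = 2*j := ⟨i1/2, by omega⟩
      have hj : PF.par j0 = PF.par j1 := by
        have h1 := W_eq_apply (e0.symm.trans e1) 0 (by omega)
        rw [pf_even' _ (by omega), pf_even' _ (by omega),
          show (2*j0+0)/2 = j0 by omega, show (2*j1+0)/2 = j1 by omega] at h1
        exact h1
      have hf0 : PF.par (j0+h) = false := by
        rw [← b0, pf_even' _ (by omega), show (2*j0+n)/2 = j0+h by omega]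
      have hf1 : PF.par (j1+h) = true := by
        rw [← b1, pf_even' _ (by omega), show (2*j1+n)/2 = j1+h by omega]
      have : PF.par (j0+h) = PF.par (j1+h) :=
        par_congr (by have := PF.par_eq_iff.mp hj; omega)
      rw [hf0, hf1] at this
      exact Bool.false_ne_true this
    obtain ⟨j0, rfl⟩ : ∃ j, i0 = 2*j+1 := ⟨i0/2, by omega⟩
    obtain ⟨j1, rfl⟩ : ∃ j, i1 = 2*j+1 := ⟨i1/2, by omega⟩
    refine ⟨j0, j1, e0, e1, ?_, ?_⟩
    · have hx : pf (2*j0+1+n) = pf (j0+h) := by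
        rw [pf_odd' _ (by omega)]; congr 1; omega
      rw [← hx]; exact b0
    · have hx : pf (2*j1+1+n) = pf (j1+h) := by
        rw [pf_odd' _ (by omega)]; congr 1; omega
      rw [← hx]; exact b1
  have evenPart_W' : ∀ j, evenPart (W (2*j+1) n) = W j h := by
    intro j
    rw [evenPart_W, show (n+1)/2 = h by omega]
  have hinj : Set.InjOn evenPart (RS n) := by
    intro w hw w' hw' heq
    obtain ⟨j0, j1, e0, e1, b0, b1⟩ := struct w hw
    obtain ⟨j0', j1', e0', e1', b0', b1'⟩ := struct w' hw'
    have hv : W j0 h = W j0' h := by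
      have hv0 : evenPart w = W j0 h := by rw [e0, evenPart_W']
      have hv0' : evenPart w' = W j0' h := by rw [e0', evenPart_W']
      rw [← hv0, ← hv0', heq]
    have hp : j0 % 2 = j0' % 2 := sync h9 hv
    rw [e0, e0']
    exact odd_start_eq hp hv (by omega)
  have himg : evenPart '' RS n = RS h := by
    apply Set.Subset.antisymm
    · rintro v ⟨w, hw, rfl⟩
      obtain ⟨j0, j1, e0, e1, b0, b1⟩ := struct w hw
      have hv0 : evenPart w = W j0 h := by rw [e0, evenPart_W']
      have hv1 : evenPart w = W j1 h := by rw [e1, evenPart_W']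
      refine ⟨hv0 ▸ W_mem_factorSet j0 h, ?_, ?_⟩
      · rw [hv0, ← b0, ← W_succ]
        exact W_mem_factorSet j0 (h+1)
      · rw [hv1, ← b1, ← W_succ]
        exact W_mem_factorSet j1 (h+1)
    · intro v hv
      obtain ⟨j0, j1, e0, e1, b0, b1⟩ := rs_occ hv
      have hp : j0 % 2 = j1 % 2 := sync h9 (e0.symm.trans e1)
      refine ⟨W (2*j0+1) n, ?_, ?_⟩
      · refine ⟨W_mem_factorSet _ _, ?_, ?_⟩
        · have : W (2*j0+1) n ++ [pf (2*j0+1 + n)] = W (2*j0+1) (n+1) := (W_succ _ _).symm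
          rw [pf_odd' _ (by omega), show (2*j0+1+n)/2 = j0 + h by omega, b0] at this
          rw [this]
          exact W_mem_factorSet _ _
        · have hsw : W (2*j0+1) n = W (2*j1+1) n :=
            odd_start_eq hp (e0.symm.trans e1) (by omega)
          have : W (2*j1+1) n ++ [pf (2*j1+1 + n)] = W (2*j1+1) (n+1) := (W_succ _ _).symm
          rw [pf_odd' _ (by omega), show (2*j1+1+n)/2 = j1 + h by omega, b1] at this
          rw [hsw, this]
          exact W_mem_factorSet _ _
      · rw [evenPart_W', ← e0]
  calc (RS n).ncard = (evenPart '' RS n).ncard := (Set.ncard_image_of_injOn hinj).symm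
    _ = (RS h).ncard := by rw [himg]

lemma RS_card (n : ℕ) (h9 : 9 ≤ n) : (RS n).ncard = 4 := by
  induction n using Nat.strong_induction_on with
  | _ n ih =>
    rcases le_or_gt n 18 with hle | hgt
    · exact RS_card_base n h9 hle
    · have h19 : 19 ≤ n := hgt
      rcases Nat.mod_two_eq_zero_or_one n with hp | hp
      · rw [RS_rec_even h19 hp]
        exact ih (n/2) (by omega) (by omega)
      · rw [RS_rec_odd h19 hp]
        exact ih (n/2) (by omega) (by omega)

lemma rho_pf (n : ℕ) (hn : 13 ≤ n) : rho pf n = 4 * n := by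
  induction n, hn using Nat.le_induction with
  | base => rw [rho13]
  | succ n hn ih =>
    rw [rho_step n, ih, RS_card n (by omega)]
    ring
lemma tortoise_form (a : ℕ) (u : List Bool) :
    tortoise (List.replicate a false ++ true :: u)
      = List.replicate a false ++ (u ++ [true]) := by
  unfold tortoise
  rw [if_pos (by simp), List.erase_append_right _ (by simp)]
  simp

lemma t2_form (a b : ℕ) (u : List Bool) :
    tortoise (tortoise (List.replicate a false ++
        true :: (List.replicate b false ++ true :: u)))
      = List.replicate (a+b) false ++ (u ++ [true, true]) := by
  rw [tortoise_form]
  have h1 : List.replicate a false ++ ((List.replicate b false ++ true :: u) ++ [true])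
      = List.replicate (a+b) false ++ true :: (u ++ [true]) := by
    simp only [List.replicate_add, List.append_assoc, List.cons_append]
  rw [h1, tortoise_form]
  simp

lemma W_four (i n : ℕ) (h : 4 ≤ n) :
    W i n = pf i :: pf (i+1) :: pf (i+2) :: pf (i+3) :: W (i+4) (n-4) := by
  obtain ⟨m, rfl⟩ : ∃ m, n = m + 4 := ⟨n-4, by omega⟩
  rw [show m + 4 = (m+3)+1 by omega, W_cons,
    show m + 3 = (m+2)+1 by omega, W_cons,
    show m + 2 = (m+1)+1 by omega, W_cons, W_cons]
  simp [show i+1+1 = i+2 by omega, show i+1+1+1 = i+3 by omega,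
    show i+1+1+1+1 = i+4 by omega]

lemma factor_decomp {n i : ℕ} (h4 : 4 ≤ n) :
    ∃ a u, a ≤ 3 ∧ W i n = List.replicate a false ++ true :: u := by
  cases h0 : pf i
  · cases h1 : pf (i+1)
    · cases h2 : pf (i+2)
      · cases h3 : pf (i+3)
        · exfalso
          rcases has_true i with h | h | h | h <;> simp_all
        · exact ⟨3, W (i+4) (n-4), by omega,
            by rw [W_four i n h4, h0, h1, h2, h3]; simp⟩
      · exact ⟨2, pf (i+3) :: W (i+4) (n-4), by omega,
          by rw [W_four i n h4, h0, h1, h2]; simp⟩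
    · exact ⟨1, pf (i+2) :: pf (i+3) :: W (i+4) (n-4), by omega,
        by rw [W_four i n h4, h0, h1]; simp⟩
  · exact ⟨0, pf (i+1) :: pf (i+2) :: pf (i+3) :: W (i+4) (n-4), by omega,
      by rw [W_four i n h4, h0]; simp⟩

lemma two_true_decomp {n i : ℕ} (h8 : 8 ≤ n) :
    ∃ a b u, a ≤ 3 ∧ b ≤ 3 ∧
      W i n = List.replicate a false ++
        true :: (List.replicate b false ++ true :: u) := by
  obtain ⟨a, u1, ha, hdec⟩ := factor_decomp (n := n) (i := i) (by omega)
  have hu1 : u1 = W (i+a+1) (n-a-1) := by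
    have hdrop : (W i n).drop (a+1) = u1 := by
      rw [hdec, List.drop_append]
      simp
    rw [← hdrop, W_drop, show i+(a+1) = i+a+1 by omega,
      show n-(a+1) = n-a-1 by omega]
  obtain ⟨b, u, hb, hdec2⟩ := factor_decomp (n := n-a-1) (i := i+a+1)
    (by omega)
  refine ⟨a, b, u, ha, hb, ?_⟩
  rw [hdec, hu1, hdec2]

set_option maxRecDepth 1000000 in
set_option maxHeartbeats 4000000 in
lemma inj13_card :
    ((candList 13 4).toFinset.image (fun w => tortoise (tortoise w))).card
      = (candList 13 4).toFinset.card := by decide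

lemma INJ_13 : Set.InjOn (fun w => tortoise (tortoise w)) (factorSet pf 13) := by
  rw [factorSet_eq 13 4 (by norm_num),
    show {w | w ∈ candList 13 4} = ((candList 13 4).toFinset : Set (List Bool)) from
      by ext w; simp]
  exact Finset.injOn_of_card_image_eq inj13_card

lemma rep_true_inj : ∀ (a c : ℕ) (x y : List Bool),
    List.replicate a false ++ true :: x = List.replicate c false ++ true :: y →
      a = c ∧ x = y := by
  intro a
  induction a with
  | zero =>
    intro c x y hxy
    cases c with
    | zero => simpa using hxy
    | succ c => rw [List.replicate_succ] at hxy; simp at hxy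
  | succ a ih =>
    intro c x y hxy
    cases c with
    | zero => rw [List.replicate_succ] at hxy; simp at hxy
    | succ c =>
      rw [List.replicate_succ, List.replicate_succ] at hxy
      simp only [List.cons_append, List.cons.injEq] at hxy
      obtain ⟨h1, h2⟩ := ih c x y hxy.2
      exact ⟨by omega, h2⟩

lemma take11_key (s : ℕ) (u : List Bool) (hs : s ≤ 6) :
    (List.replicate s false ++ u).take 11
      = List.replicate s false ++ u.take (11 - s) := by
  rw [List.take_append, List.take_of_length_le (by simp; omega)]
  congr 2
  simp

lemma t2_injOn (n : ℕ) (hn : 13 ≤ n) :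
    Set.InjOn (fun w => tortoise (tortoise w)) (factorSet pf n) := by
  intro w hw v hv heq
  obtain ⟨hwl, i, rfl⟩ := mem_factorSet_iff.mp hw
  obtain ⟨hvl, i', rfl⟩ := mem_factorSet_iff.mp hv
  obtain ⟨a, b, u, ha, hb, hWdec⟩ := two_true_decomp (n := n) (i := i) (by omega)
  obtain ⟨c, d, u', hc, hd, hVdec⟩ := two_true_decomp (n := n) (i := i') (by omega)
  have hulen : u.length = n - (a+b) - 2 := by
    have hl := congrArg List.length hWdec
    rw [W_length] at hl
    simp at hl
    omega
  have hu'len : u'.length = n - (c+d) - 2 := by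
    have hl := congrArg List.length hVdec
    rw [W_length] at hl
    simp at hl
    omega
  have heq2 : List.replicate (a+b) false ++ (u ++ [true, true])
      = List.replicate (c+d) false ++ (u' ++ [true, true]) := by
    rw [← t2_form a b u, ← t2_form c d u', ← hWdec, ← hVdec]
    exact heq
  have hz : List.replicate (a+b) false ++ u = List.replicate (c+d) false ++ u' := by
    have h' : (List.replicate (a+b) false ++ u) ++ [true, true]
        = (List.replicate (c+d) false ++ u') ++ [true, true] := by
      rw [List.append_assoc, List.append_assoc]
      exact heq2
    exact (List.append_inj' h' rfl).1
  -- length 13 truncations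
  have hP : ∀ (e f : ℕ) (x : List Bool),
      List.replicate e false ++ true :: (List.replicate f false ++ true :: x)
        = (List.replicate e false ++ true :: (List.replicate f false ++ [true])) ++ x := by
    intro e f x
    simp
  have hPlen : ∀ (e f : ℕ),
      (List.replicate e false ++ true :: (List.replicate f false ++ [true])).length
        = e + f + 2 := by
    intro e f
    simp
    omega
  have hw13 : W i 13 = List.replicate a false ++
      true :: (List.replicate b false ++ true :: (u.take (11 - (a+b)))) := by
    rw [← W_take i n 13 hn, hWdec, hP, List.take_append,
      List.take_of_length_le (by rw [hPlen]; omega), hPlen,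
      show 13 - (a+b+2) = 11 - (a+b) by omega]
    simp
  have hv13 : W i' 13 = List.replicate c false ++
      true :: (List.replicate d false ++ true :: (u'.take (11 - (c+d)))) := by
    rw [← W_take i' n 13 hn, hVdec, hP, List.take_append,
      List.take_of_length_le (by rw [hPlen]; omega), hPlen,
      show 13 - (c+d+2) = 11 - (c+d) by omega]
    simp
  have heq13 : W i 13 = W i' 13 := by
    apply INJ_13 (W_mem_factorSet i 13) (W_mem_factorSet i' 13)
    show tortoise (tortoise (W i 13)) = tortoise (tortoise (W i' 13))
    rw [hw13, hv13, t2_form, t2_form, ← List.append_assoc, ← List.append_assoc,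
      ← take11_key (a+b) u (by omega), ← take11_key (c+d) u' (by omega), hz]
  rw [hw13, hv13] at heq13
  obtain ⟨hac, heq13'⟩ := rep_true_inj a c _ _ heq13
  obtain ⟨hbd, _⟩ := rep_true_inj b d _ _ heq13'
  have huu : u = u' := by
    rw [hac, hbd] at hz
    exact List.append_cancel_left hz
  rw [hWdec, hVdec, hac, hbd, huu]

/-- for all `n ≥ 13`, the 2-tortoise complexity of the paperfolding
word satisfies `ρ^{t(2)}_f(n) = 4n`. -/
theorem stmt_6 (n : ℕ) (hn : 13 ≤ n) : rhoTortK 2 pf n = 4 * n := by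
  have h2 : (tortoise^[2]) = fun w => tortoise (tortoise w) := by
    funext w
    rfl
  rw [rhoTortK, h2, Set.ncard_image_of_injOn (t2_injOn n hn)]
  exact rho_pf n hn
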